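/- The tension τ̂ is three times differentiable, with τ̂''(ρ) = −G'''(τ̂(ρ)) · τ̂'(ρ)³ and τ̂'''(ρ) = 3 τ̂''(ρ)² / τ̂'(ρ) − G''''(τ̂(ρ)) · τ̂'(ρ)⁴ for all ρ ∈ ℝ, and both τ̂'' and τ̂''' are bounded functions on ℝ. -/

import Mathlib

open MeasureTheory Real

/-- The Gibbs function `G(τ) = log ∫ exp(τ r - V(r)) dr`. -/
noncomputable def gibbsG (V : ℝ → ℝ) (τ : ℝ) : ℝ :=
  Real.log (∫ r : ℝ, Real.exp (τ * r - V r))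

/-- The free energy `F(ρ) = sup_τ (τ ρ - G(τ))`. -/
noncomputable def freeF (V : ℝ → ℝ) (ρ : ℝ) : ℝ :=
  ⨆ τ : ℝ, (τ * ρ - gibbsG V τ)

/-- The tension `τ̂ = F'`. -/
noncomputable def tension (V : ℝ → ℝ) : ℝ → ℝ :=
  deriv (freeF V)


section Basics
variable {V : ℝ → ℝ} {c₁ c₂ : ℝ}

lemma hVdiff (hV : ContDiff ℝ 2 V) : Differentiable ℝ V := hV.differentiable (by norm_num)

lemma hV1 (hV : ContDiff ℝ 2 V) : Differentiable ℝ (deriv V) := by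
  have h : ContDiff ℝ (1+1) V := by norm_num at hV ⊢; exact hV
  exact ((contDiff_succ_iff_deriv.mp h).2.2).differentiable (by norm_num)

lemma monoA (hV : ContDiff ℝ 2 V) (hlow : ∀ r : ℝ, c₁ ≤ deriv (deriv V) r) :
    Monotone (fun u => deriv V u - c₁ * u) := by
  have hd : Differentiable ℝ (fun u => deriv V u - c₁ * u) :=
    (hV1 hV).sub ((differentiable_id.const_mul c₁))
  apply monotone_of_deriv_nonneg hd
  intro x
  have h1 : HasDerivAt (fun u => deriv V u - c₁ * u) (deriv (deriv V) x - c₁ * 1) x :=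
    ((hV1 hV x).hasDerivAt).sub ((hasDerivAt_id x).const_mul c₁)
  rw [h1.deriv]
  have := hlow x; linarith

lemma monoB (hV : ContDiff ℝ 2 V) (hhigh : ∀ r : ℝ, deriv (deriv V) r ≤ c₂) :
    Monotone (fun u => c₂ * u - deriv V u) := by
  have hd : Differentiable ℝ (fun u => c₂ * u - deriv V u) :=
    (differentiable_id.const_mul c₂).sub (hV1 hV)
  apply monotone_of_deriv_nonneg hd
  intro x
  have h1 : HasDerivAt (fun u => c₂ * u - deriv V u) (c₂ * 1 - deriv (deriv V) x) x :=
    ((hasDerivAt_id x).const_mul c₂).sub ((hV1 hV x).hasDerivAt)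
  rw [h1.deriv]
  have := hhigh x; linarith

lemma slope_lb (hV : ContDiff ℝ 2 V) (hlow : ∀ r : ℝ, c₁ ≤ deriv (deriv V) r)
    {x y : ℝ} (hxy : x ≤ y) : c₁ * (y - x) ≤ deriv V y - deriv V x := by
  have := monoA hV hlow hxy
  simp only at this; linarith

lemma slope_ub (hV : ContDiff ℝ 2 V) (hhigh : ∀ r : ℝ, deriv (deriv V) r ≤ c₂)
    {x y : ℝ} (hxy : x ≤ y) : deriv V y - deriv V x ≤ c₂ * (y - x) := by
  have := monoB hV hhigh hxy
  simp only at this; linarith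

/-- Taylor lower bound from uniform convexity. -/
lemma taylor_lb (hV : ContDiff ℝ 2 V) (hlow : ∀ r : ℝ, c₁ ≤ deriv (deriv V) r)
    (x y : ℝ) : V x + deriv V x * (y - x) + c₁/2 * (y - x)^2 ≤ V y := by
  set ψ : ℝ → ℝ := fun s => V s - (V x + deriv V x * (s - x) + c₁/2 * (s - x)^2) with hψ
  have hψd : Differentiable ℝ ψ := by
    apply (hVdiff hV).sub
    fun_prop
  have hψderiv : ∀ s, deriv ψ s = deriv V s - (deriv V x + c₁ * (s - x)) := by
    intro s
    have h1 : HasDerivAt (fun s : ℝ => V x + deriv V x * (s - x) + c₁/2 * (s - x)^2)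
        (deriv V x + c₁/2 * (2 * (s - x))) s := by
      have h2 : HasDerivAt (fun s : ℝ => s - x) 1 s := (hasDerivAt_id s).sub_const x
      have h3 : HasDerivAt (fun s : ℝ => (s - x)^2) (2 * (s - x) * 1) s := by
        simpa using (h2.fun_pow 2)
      have := ((h2.const_mul (deriv V x)).const_add (V x)).fun_add (h3.const_mul (c₁/2))
      refine this.congr_deriv (Eq.symm ?_); ring
    rw [((hVdiff hV s).hasDerivAt.fun_sub h1).deriv]; ring
  have hx0 : ψ x = 0 := by simp [hψ]
  have key : ∀ s, 0 ≤ ψ s := by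
    intro s
    rcases le_total x s with h | h
    · have hm : MonotoneOn ψ (Set.Ici x) := by
        apply monotoneOn_of_deriv_nonneg (convex_Ici x) hψd.continuous.continuousOn
          (hψd.differentiableOn)
        intro u hu
        rw [hψderiv u]
        rw [interior_Ici] at hu
        have := slope_lb hV hlow (le_of_lt hu)
        linarith
      have := hm (Set.self_mem_Ici) (Set.mem_Ici.mpr h) h
      linarith [hx0]
    · have hm : AntitoneOn ψ (Set.Iic x) := by
        apply antitoneOn_of_deriv_nonpos (convex_Iic x) hψd.continuous.continuousOn
          (hψd.differentiableOn)
        intro u hu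
        rw [hψderiv u]
        rw [interior_Iic] at hu
        have := slope_lb hV hlow (le_of_lt hu)
        linarith
      have := hm (Set.mem_Iic.mpr h) (Set.self_mem_Iic) h
      linarith [hx0]
  have := key y; simp only [hψ] at this; linarith

/-- Taylor upper bound. -/
lemma taylor_ub (hV : ContDiff ℝ 2 V) (hhigh : ∀ r : ℝ, deriv (deriv V) r ≤ c₂)
    (x y : ℝ) : V y ≤ V x + deriv V x * (y - x) + c₂/2 * (y - x)^2 := by
  set ψ : ℝ → ℝ := fun s => (V x + deriv V x * (s - x) + c₂/2 * (s - x)^2) - V s with hψ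
  have hψd : Differentiable ℝ ψ := by
    apply Differentiable.sub _ (hVdiff hV)
    fun_prop
  have hψderiv : ∀ s, deriv ψ s = (deriv V x + c₂ * (s - x)) - deriv V s := by
    intro s
    have h2 : HasDerivAt (fun s : ℝ => s - x) 1 s := (hasDerivAt_id s).sub_const x
    have h3 : HasDerivAt (fun s : ℝ => (s - x)^2) (2 * (s - x) * 1) s := by
      simpa using (h2.fun_pow 2)
    have h1 : HasDerivAt (fun s : ℝ => V x + deriv V x * (s - x) + c₂/2 * (s - x)^2)
        (deriv V x + c₂/2 * (2 * (s - x))) s := by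
      have := ((h2.const_mul (deriv V x)).const_add (V x)).fun_add (h3.const_mul (c₂/2))
      refine this.congr_deriv (Eq.symm ?_); ring
    rw [(h1.fun_sub (hVdiff hV s).hasDerivAt).deriv]; ring
  have hx0 : ψ x = 0 := by simp [hψ]
  have key : ∀ s, 0 ≤ ψ s := by
    intro s
    rcases le_total x s with h | h
    · have hm : MonotoneOn ψ (Set.Ici x) := by
        apply monotoneOn_of_deriv_nonneg (convex_Ici x) hψd.continuous.continuousOn
          (hψd.differentiableOn)
        intro u hu
        rw [hψderiv u]
        rw [interior_Ici] at hu
        have := slope_ub hV hhigh (le_of_lt hu)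
        linarith
      have := hm (Set.self_mem_Ici) (Set.mem_Ici.mpr h) h
      linarith [hx0]
    · have hm : AntitoneOn ψ (Set.Iic x) := by
        apply antitoneOn_of_deriv_nonpos (convex_Iic x) hψd.continuous.continuousOn
          (hψd.differentiableOn)
        intro u hu
        rw [hψderiv u]
        rw [interior_Iic] at hu
        have := slope_ub hV hhigh (le_of_lt hu)
        linarith
      have := hm (Set.mem_Iic.mpr h) (Set.self_mem_Iic) h
      linarith [hx0]
  have := key y; simp only [hψ] at this; linarith

/-- `deriv V` is surjective. -/
lemma derivV_surj (hV : ContDiff ℝ 2 V) (hc₁ : 0 < c₁)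
    (hlow : ∀ r : ℝ, c₁ ≤ deriv (deriv V) r) (τ : ℝ) : ∃ x, deriv V x = τ := by
  set b : ℝ := max 0 ((τ - deriv V 0)/c₁ + 1) with hb
  set a : ℝ := min 0 ((τ - deriv V 0)/c₁ - 1) with ha
  have hab : a ≤ b := le_trans (min_le_left _ _) (le_max_left _ _)
  have hfb : τ ≤ deriv V b := by
    have h1 := slope_lb hV hlow (le_max_left 0 ((τ - deriv V 0)/c₁ + 1))
    have h2 : (τ - deriv V 0)/c₁ + 1 ≤ b := le_max_right _ _
    have h3 : c₁ * ((τ - deriv V 0)/c₁ + 1) ≤ c₁ * b := by nlinarith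
    have h4 : c₁ * ((τ - deriv V 0)/c₁ + 1) = τ - deriv V 0 + c₁ := by field_simp
    nlinarith
  have hfa : deriv V a ≤ τ := by
    have h1 := slope_lb hV hlow (min_le_left 0 ((τ - deriv V 0)/c₁ - 1))
    have h2 : a ≤ (τ - deriv V 0)/c₁ - 1 := min_le_right _ _
    have h3 : c₁ * a ≤ c₁ * ((τ - deriv V 0)/c₁ - 1) := by nlinarith
    have h4 : c₁ * ((τ - deriv V 0)/c₁ - 1) = τ - deriv V 0 - c₁ := by field_simp
    nlinarith
  have := intermediate_value_Icc hab ((hV1 hV).continuous.continuousOn)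
  obtain ⟨x, _, hx⟩ := this ⟨hfa, hfb⟩
  exact ⟨x, hx⟩
end Basics

lemma abs_pow_le_factorial_exp (s : ℝ) (n : ℕ) : |s|^n ≤ (n.factorial : ℝ) * Real.exp |s| := by
  have h1 : |s|^n / (n.factorial : ℝ) ≤ Real.exp |s| := by
    have h2 : |s|^n / (n.factorial : ℝ) ≤ ∑ i ∈ Finset.range (n+1), |s|^i / (i.factorial : ℝ) := by
      exact Finset.single_le_sum (f := fun i => |s|^i / (i.factorial : ℝ))
        (fun i _ => by positivity) (Finset.self_mem_range_succ n)
    exact h2.trans (Real.sum_le_exp_of_nonneg (abs_nonneg s) (n+1))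
  have hn : (0:ℝ) < n.factorial := by positivity
  calc |s|^n = (n.factorial : ℝ) * (|s|^n / n.factorial) := by field_simp
    _ ≤ (n.factorial : ℝ) * Real.exp |s| := by nlinarith [Real.exp_pos |s|]

lemma gauss_pow {b : ℝ} (hb : 0 < b) (n : ℕ) :
    Integrable (fun s : ℝ => |s|^n * Real.exp (-b * s^2)) := by
  apply Integrable.mono' (g := fun s : ℝ => ((n.factorial : ℝ) * Real.exp (1/(2*b))) * Real.exp (-(b/2) * s^2))
    (((integrable_exp_neg_mul_sq (half_pos hb)).const_mul _))
  · apply Continuous.aestronglyMeasurable; fun_prop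
  · filter_upwards with s
    rw [Real.norm_eq_abs, abs_of_nonneg (by positivity)]
    have h1 : |s|^n ≤ (n.factorial : ℝ) * Real.exp |s| := abs_pow_le_factorial_exp s n
    have h2 : |s| ≤ b/2 * s^2 + 1/(2*b) := by
      have key : 2*b*|s| ≤ b^2*s^2 + 1 := by nlinarith [sq_nonneg (b*|s|-1), sq_abs s]
      have h5 : |s| ≤ (b^2*s^2+1)/(2*b) := by
        rw [le_div_iff₀ (by positivity)]; linarith
      have h6 : (b^2*s^2+1)/(2*b) = b/2 * s^2 + 1/(2*b) := by field_simp
      linarith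
    have h4 : Real.exp |s| * Real.exp (-b * s^2) ≤ Real.exp (1/(2*b)) * Real.exp (-(b/2) * s^2) := by
      rw [← Real.exp_add, ← Real.exp_add]
      apply Real.exp_le_exp.mpr; linarith
    calc |s|^n * Real.exp (-b * s^2) ≤ ((n.factorial : ℝ) * Real.exp |s|) * Real.exp (-b * s^2) := by
          nlinarith [Real.exp_pos (-b * s^2)]
      _ = (n.factorial : ℝ) * (Real.exp |s| * Real.exp (-b * s^2)) := by ring
      _ ≤ (n.factorial : ℝ) * (Real.exp (1/(2*b)) * Real.exp (-(b/2) * s^2)) := by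
          have hn : (0:ℝ) ≤ n.factorial := by positivity
          nlinarith [Real.exp_pos (-(b/2) * s^2), Real.exp_pos (1/(2*b)),
            mul_le_mul_of_nonneg_left h4 hn]
      _ = ((n.factorial : ℝ) * Real.exp (1/(2*b))) * Real.exp (-(b/2) * s^2) := by ring

lemma abs_add_pow_le (a c : ℝ) (n : ℕ) : |a + c|^n ≤ 2^n * (|a|^n + |c|^n) := by
  have h1 : |a + c| ≤ |a| + |c| := abs_add_le a c
  have h2 : |a + c|^n ≤ (|a| + |c|)^n := pow_le_pow_left₀ (abs_nonneg _) h1 n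
  have h3 : (|a| + |c|)^n ≤ (2 * max |a| |c|)^n := by
    apply pow_le_pow_left₀ (by positivity)
    rcases le_total |a| |c| with h | h
    · rw [max_eq_right h]; linarith
    · rw [max_eq_left h]; linarith
  have h4 : (2 * max |a| |c|)^n = 2^n * (max |a| |c|)^n := mul_pow 2 _ n
  have h5 : (max |a| |c|)^n ≤ |a|^n + |c|^n := by
    rcases le_total |a| |c| with h | h
    · rw [max_eq_right h]
      have : (0:ℝ) ≤ |a|^n := by positivity
      linarith
    · rw [max_eq_left h]
      have : (0:ℝ) ≤ |c|^n := by positivity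
      linarith
  calc |a+c|^n ≤ (|a|+|c|)^n := h2
    _ ≤ 2^n * (max |a| |c|)^n := by rw [← h4]; exact h3
    _ ≤ 2^n * (|a|^n + |c|^n) := by
        have : (0:ℝ) ≤ 2^n := by positivity
        nlinarith

section Sandwich
variable {V : ℝ → ℝ} {c₁ c₂ : ℝ}

/-- Upper sandwich: `τ r - V r ≤ M - c₁/2 (r-x)²` where `x` is the maximiser. -/
lemma sandwich_ub (hV : ContDiff ℝ 2 V) (hlow : ∀ r : ℝ, c₁ ≤ deriv (deriv V) r)
    {x τ : ℝ} (hx : deriv V x = τ) (r : ℝ) :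
    τ * r - V r ≤ (τ * x - V x) - c₁/2 * (r - x)^2 := by
  have := taylor_lb hV hlow x r
  rw [hx] at this; nlinarith

lemma sandwich_lb (hV : ContDiff ℝ 2 V) (hhigh : ∀ r : ℝ, deriv (deriv V) r ≤ c₂)
    {x τ : ℝ} (hx : deriv V x = τ) (r : ℝ) :
    (τ * x - V x) - c₂/2 * (r - x)^2 ≤ τ * r - V r := by
  have := taylor_ub hV hhigh x r
  rw [hx] at this; nlinarith

/-- Integrability of `|r-y|^n exp(τ r - V r)`. -/
lemma integrable_weight (hc₁ : 0 < c₁) (hV : ContDiff ℝ 2 V)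
    (hlow : ∀ r : ℝ, c₁ ≤ deriv (deriv V) r) (τ y : ℝ) (n : ℕ) :
    Integrable (fun r : ℝ => |r - y|^n * Real.exp (τ * r - V r)) := by
  obtain ⟨x, hx⟩ := derivV_surj hV hc₁ hlow τ
  set M : ℝ := τ * x - V x with hM
  -- the dominating function
  have hfint : Integrable (fun s : ℝ => |s + (x - y)|^n * Real.exp (-(c₁/2) * s^2)) := by
    apply Integrable.mono'
      (g := fun s : ℝ => 2^n * (|s|^n * Real.exp (-(c₁/2) * s^2))
        + (2^n * |x - y|^n) * Real.exp (-(c₁/2) * s^2))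
      (((gauss_pow (half_pos hc₁) n).const_mul _).add
        ((integrable_exp_neg_mul_sq (half_pos hc₁)).const_mul _))
    · apply Continuous.aestronglyMeasurable; fun_prop
    · filter_upwards with s
      rw [Real.norm_eq_abs, abs_of_nonneg (by positivity)]
      have h1 := abs_add_pow_le s (x - y) n
      nlinarith [Real.exp_pos (-(c₁/2) * s^2), pow_nonneg (abs_nonneg (s + (x-y))) n]
  have hgint : Integrable (fun r : ℝ => Real.exp M * (|r - y|^n * Real.exp (-(c₁/2) * (r - x)^2))) := by
    have h := (hfint.comp_sub_right x).const_mul (Real.exp M)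
    have h7 : (fun r : ℝ => Real.exp M * (|r - y|^n * Real.exp (-(c₁/2) * (r - x)^2)))
        = (fun r : ℝ => Real.exp M * (|r - x + (x - y)|^n * Real.exp (-(c₁/2) * (r - x)^2))) := by
      funext r; congr 3; ring
    rw [h7]; exact h
  apply Integrable.mono' hgint
  · apply Continuous.aestronglyMeasurable
    have hVc : Continuous V := (hVdiff hV).continuous
    fun_prop
  · filter_upwards with r
    rw [Real.norm_eq_abs, abs_of_nonneg (by positivity)]
    have h1 := sandwich_ub hV hlow hx r
    have h2 : Real.exp (τ * r - V r) ≤ Real.exp M * Real.exp (-(c₁/2) * (r - x)^2) := by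
      rw [← Real.exp_add]
      apply Real.exp_le_exp.mpr; rw [hM]; linarith
    nlinarith [pow_nonneg (abs_nonneg (r - y)) n, Real.exp_pos (τ * r - V r)]

/-- Integrability of `(r-y)^n exp(τ r - V r)`. -/
lemma integrable_cpow (hc₁ : 0 < c₁) (hV : ContDiff ℝ 2 V)
    (hlow : ∀ r : ℝ, c₁ ≤ deriv (deriv V) r) (τ y : ℝ) (n : ℕ) :
    Integrable (fun r : ℝ => (r - y)^n * Real.exp (τ * r - V r)) := by
  apply Integrable.mono' (integrable_weight hc₁ hV hlow τ y n)
  · apply Continuous.aestronglyMeasurable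
    have hVc : Continuous V := (hVdiff hV).continuous
    fun_prop
  · filter_upwards with r
    rw [Real.norm_eq_abs, abs_mul, abs_of_nonneg (Real.exp_pos _).le, abs_pow]

lemma integrable_pow_exp (hc₁ : 0 < c₁) (hV : ContDiff ℝ 2 V)
    (hlow : ∀ r : ℝ, c₁ ≤ deriv (deriv V) r) (τ : ℝ) (n : ℕ) :
    Integrable (fun r : ℝ => r^n * Real.exp (τ * r - V r)) := by
  have := integrable_cpow hc₁ hV hlow τ 0 n
  simpa using this

lemma integrable_exp_h (hc₁ : 0 < c₁) (hV : ContDiff ℝ 2 V)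
    (hlow : ∀ r : ℝ, c₁ ≤ deriv (deriv V) r) (τ : ℝ) :
    Integrable (fun r : ℝ => Real.exp (τ * r - V r)) := by
  have := integrable_pow_exp hc₁ hV hlow τ 0
  simpa using this

end Sandwich

noncomputable def Ei (V : ℝ → ℝ) (n : ℕ) (τ : ℝ) : ℝ := ∫ r : ℝ, r^n * Real.exp (τ * r - V r)

section EiFacts
variable {V : ℝ → ℝ} {c₁ c₂ : ℝ}

lemma hasDerivAt_Ei (hc₁ : 0 < c₁) (hV : ContDiff ℝ 2 V)
    (hlow : ∀ r : ℝ, c₁ ≤ deriv (deriv V) r) (n : ℕ) (τ : ℝ) :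
    HasDerivAt (Ei V n) (Ei V (n+1) τ) τ := by
  have hVc : Continuous V := (hVdiff hV).continuous
  have key := hasDerivAt_integral_of_dominated_loc_of_deriv_le
    (F := fun (t : ℝ) (r : ℝ) => r^n * Real.exp (t * r - V r))
    (F' := fun (t : ℝ) (r : ℝ) => r^(n+1) * Real.exp (t * r - V r))
    (x₀ := τ) (s := Metric.ball τ 1)
    (bound := fun r => |r|^(n+1) * Real.exp ((τ+1) * r - V r)
      + |r|^(n+1) * Real.exp ((τ-1) * r - V r))
    (Metric.ball_mem_nhds τ one_pos)
    (by filter_upwards with t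
        exact (Continuous.aestronglyMeasurable (by fun_prop)))
    (integrable_pow_exp hc₁ hV hlow τ n)
    (Continuous.aestronglyMeasurable (by fun_prop))
    (by filter_upwards with r
        intro t ht
        rw [Metric.mem_ball, Real.dist_eq, abs_lt] at ht
        rw [Real.norm_eq_abs, abs_mul, abs_pow, abs_of_nonneg (Real.exp_pos _).le]
        have hcase : Real.exp (t * r - V r) ≤ Real.exp ((τ+1) * r - V r)
            + Real.exp ((τ-1) * r - V r) := by
          rcases le_total 0 r with h | h
          · have : t * r ≤ (τ+1) * r := by nlinarith
            have h1 : Real.exp (t * r - V r) ≤ Real.exp ((τ+1) * r - V r) :=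
              Real.exp_le_exp.mpr (by linarith)
            linarith [Real.exp_pos ((τ-1) * r - V r)]
          · have : t * r ≤ (τ-1) * r := by nlinarith
            have h1 : Real.exp (t * r - V r) ≤ Real.exp ((τ-1) * r - V r) :=
              Real.exp_le_exp.mpr (by linarith)
            linarith [Real.exp_pos ((τ+1) * r - V r)]
        have hpos : (0:ℝ) ≤ |r|^(n+1) := by positivity
        calc |r|^(n+1) * Real.exp (t * r - V r)
            ≤ |r|^(n+1) * (Real.exp ((τ+1) * r - V r) + Real.exp ((τ-1) * r - V r)) := by
              nlinarith
          _ = |r|^(n+1) * Real.exp ((τ+1) * r - V r) + |r|^(n+1) * Real.exp ((τ-1) * r - V r) := by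
              ring)
    (by have h1 := integrable_weight hc₁ hV hlow (τ+1) 0 (n+1)
        have h2 := integrable_weight hc₁ hV hlow (τ-1) 0 (n+1)
        simp only [sub_zero] at h1 h2
        exact h1.add h2)
    (by filter_upwards with r
        intro t ht
        have h1 : HasDerivAt (fun t : ℝ => t * r - V r) r t :=
          (hasDerivAt_mul_const r).sub_const (V r)
        have h2 := (h1.exp).const_mul (r^n)
        refine h2.congr_deriv (Eq.symm ?_)
        ring)
  exact key.2

lemma Ei0_pos (hc₁ : 0 < c₁) (hV : ContDiff ℝ 2 V)
    (hlow : ∀ r : ℝ, c₁ ≤ deriv (deriv V) r) (τ : ℝ) : 0 < Ei V 0 τ := by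
  have hint : Integrable (fun r : ℝ => r^0 * Real.exp (τ * r - V r)) :=
    integrable_pow_exp hc₁ hV hlow τ 0
  rw [Ei]
  rw [integral_pos_iff_support_of_nonneg (fun r => by positivity) hint]
  have : Function.support (fun r : ℝ => r^0 * Real.exp (τ * r - V r)) = Set.univ := by
    ext r; simp [Function.support, (Real.exp_pos _).ne']
  rw [this]
  simp

end EiFacts

noncomputable def gm (V : ℝ → ℝ) (τ : ℝ) : ℝ := Ei V 1 τ / Ei V 0 τ
noncomputable def gv (V : ℝ → ℝ) (τ : ℝ) : ℝ := Ei V 2 τ / Ei V 0 τ - (gm V τ)^2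
noncomputable def gc3 (V : ℝ → ℝ) (τ : ℝ) : ℝ :=
  Ei V 3 τ / Ei V 0 τ - 3 * (Ei V 2 τ / Ei V 0 τ) * gm V τ + 2 * (gm V τ)^3
noncomputable def gc4 (V : ℝ → ℝ) (τ : ℝ) : ℝ :=
  Ei V 4 τ / Ei V 0 τ - 4 * (Ei V 3 τ / Ei V 0 τ) * gm V τ
    - 3 * (Ei V 2 τ / Ei V 0 τ)^2 + 12 * (Ei V 2 τ / Ei V 0 τ) * (gm V τ)^2 - 6 * (gm V τ)^4

section Cumulants
variable {V : ℝ → ℝ} {c₁ c₂ : ℝ} (hc₁ : 0 < c₁) (hV : ContDiff ℝ 2 V)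
  (hlow : ∀ r : ℝ, c₁ ≤ deriv (deriv V) r)
include hc₁ hV hlow

lemma hasDerivAt_gibbsG (τ : ℝ) : HasDerivAt (gibbsG V) (gm V τ) τ := by
  have h0 := hasDerivAt_Ei hc₁ hV hlow 0 τ
  have hpos := Ei0_pos hc₁ hV hlow τ
  have hlog := (Real.hasDerivAt_log hpos.ne').comp τ h0
  have heq : gibbsG V = fun t => Real.log (Ei V 0 t) := by
    funext t; rw [gibbsG, Ei]; simp
  rw [heq]
  simp only [gm]
  exact hlog.congr_deriv (by rw [div_eq_inv_mul])

lemma hasDerivAt_gm (τ : ℝ) : HasDerivAt (gm V) (gv V τ) τ := by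
  have h0 := hasDerivAt_Ei hc₁ hV hlow 0 τ
  have h1 := hasDerivAt_Ei hc₁ hV hlow 1 τ
  have hpos := Ei0_pos hc₁ hV hlow τ
  have := h1.fun_div h0 hpos.ne'
  refine this.congr_deriv (Eq.symm ?_)
  simp only [gv, gm]
  field_simp

lemma hasDerivAt_gv (τ : ℝ) : HasDerivAt (gv V) (gc3 V τ) τ := by
  have h0 := hasDerivAt_Ei hc₁ hV hlow 0 τ
  have h2 := hasDerivAt_Ei hc₁ hV hlow 2 τ
  have hpos := Ei0_pos hc₁ hV hlow τ
  have hm := hasDerivAt_gm hc₁ hV hlow τ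
  have := (h2.fun_div h0 hpos.ne').fun_sub ((hm.fun_pow 2))
  refine this.congr_deriv (Eq.symm ?_)
  simp only [gc3, gv, gm]
  have hne := hpos.ne'
  simp only [Nat.cast_ofNat, show (2:ℕ) - 1 = 1 from rfl, show (3:ℕ) - 1 = 2 from rfl, pow_one]
  field_simp
  ring

lemma hasDerivAt_gc3 (τ : ℝ) : HasDerivAt (gc3 V) (gc4 V τ) τ := by
  have h0 := hasDerivAt_Ei hc₁ hV hlow 0 τ
  have h2 := hasDerivAt_Ei hc₁ hV hlow 2 τ
  have h3 := hasDerivAt_Ei hc₁ hV hlow 3 τ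
  have hpos := Ei0_pos hc₁ hV hlow τ
  have hm := hasDerivAt_gm hc₁ hV hlow τ
  have hthis := ((h3.fun_div h0 hpos.ne').fun_sub
      (((h2.fun_div h0 hpos.ne').fun_mul hm).const_mul 3)).fun_add ((hm.fun_pow 3).const_mul 2)
  have hfun : gc3 V = fun x => Ei V 3 x / Ei V 0 x - 3 * (Ei V 2 x / Ei V 0 x * gm V x)
      + 2 * gm V x ^ 3 := by
    funext x; simp only [gc3]; ring
  rw [hfun]
  refine hthis.congr_deriv (Eq.symm ?_)
  simp only [gc4, gv, gm]
  have hne := hpos.ne'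
  simp only [Nat.cast_ofNat, show (2:ℕ) - 1 = 1 from rfl, show (3:ℕ) - 1 = 2 from rfl, pow_one]
  field_simp
  ring

end Cumulants

noncomputable def KL (c : ℝ) : ℝ := ∫ s : ℝ, Real.exp (-(c/2) * s^2)
noncomputable def Kn (c : ℝ) (n : ℕ) : ℝ := ∫ s : ℝ, |s|^n * Real.exp (-(c/2) * s^2)

lemma KL_pos {c : ℝ} (hc : 0 < c) : 0 < KL c := by
  rw [KL, integral_pos_iff_support_of_nonneg (fun s => (Real.exp_pos _).le)
    (integrable_exp_neg_mul_sq (half_pos hc))]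
  have : Function.support (fun s : ℝ => Real.exp (-(c/2) * s^2)) = Set.univ := by
    ext s; simp [Function.support, (Real.exp_pos _).ne']
  rw [this]; simp

lemma Kn_nonneg (c : ℝ) (n : ℕ) : 0 ≤ Kn c n :=
  integral_nonneg (fun s => by positivity)

section Bounds
variable {V : ℝ → ℝ} {c₁ c₂ : ℝ} (hc₁ : 0 < c₁) (hV : ContDiff ℝ 2 V)
  (hlow : ∀ r : ℝ, c₁ ≤ deriv (deriv V) r) (hhigh : ∀ r : ℝ, deriv (deriv V) r ≤ c₂)

lemma hc₂ (hc₁ : 0 < c₁) (hlow : ∀ r : ℝ, c₁ ≤ deriv (deriv V) r)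
    (hhigh : ∀ r : ℝ, deriv (deriv V) r ≤ c₂) : 0 < c₂ :=
  lt_of_lt_of_le hc₁ (le_trans (hlow 0) (hhigh 0))

include hc₁ hV hlow in
/-- Uniform bound on centered absolute moments. -/
lemma moment_bound {τ x : ℝ} (hx : deriv V x = τ) (k : ℕ) :
    (∫ r : ℝ, |r - x|^k * Real.exp (τ * r - V r))
      ≤ Real.exp (τ * x - V x) * Kn c₁ k := by
  have hrhs : Integrable (fun r : ℝ =>
      Real.exp (τ * x - V x) * (|r - x|^k * Real.exp (-(c₁/2) * (r - x)^2))) := by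
    have h1 := ((gauss_pow (half_pos hc₁) k).const_mul (Real.exp (τ * x - V x))).comp_sub_right x
    exact h1
  have h2 : (∫ r : ℝ, |r - x|^k * Real.exp (τ * r - V r))
      ≤ ∫ r : ℝ, Real.exp (τ * x - V x) * (|r - x|^k * Real.exp (-(c₁/2) * (r - x)^2)) := by
    apply integral_mono (integrable_weight hc₁ hV hlow τ x k) hrhs
    intro r
    have h3 := sandwich_ub hV hlow hx r
    have h4 : Real.exp (τ * r - V r)
        ≤ Real.exp (τ * x - V x) * Real.exp (-(c₁/2) * (r - x)^2) := by
      rw [← Real.exp_add]; apply Real.exp_le_exp.mpr; linarith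
    simp only
    nlinarith [pow_nonneg (abs_nonneg (r - x)) k, Real.exp_pos (τ * r - V r)]
  have h5 : (∫ r : ℝ, Real.exp (τ * x - V x) * (|r - x|^k * Real.exp (-(c₁/2) * (r - x)^2)))
      = Real.exp (τ * x - V x) * Kn c₁ k := by
    rw [MeasureTheory.integral_const_mul, Kn]
    congr 1
    exact integral_sub_right_eq_self (fun s => |s|^k * Real.exp (-(c₁/2) * s^2)) x
  linarith

include hc₁ hV hlow in
lemma Z_upper {τ x : ℝ} (hx : deriv V x = τ) :
    Ei V 0 τ ≤ Real.exp (τ * x - V x) * KL c₁ := by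
  have h := moment_bound hc₁ hV hlow hx 0
  simp only [pow_zero, one_mul] at h
  have hKL : Kn c₁ 0 = KL c₁ := by
    rw [Kn, KL]; congr 1; funext s; rw [pow_zero, one_mul]
  rw [Ei]
  simp only [pow_zero, one_mul]
  rw [← hKL]
  exact h

include hc₁ hV hlow hhigh in
lemma Z_lower {τ x : ℝ} (hx : deriv V x = τ) :
    Real.exp (τ * x - V x) * KL c₂ ≤ Ei V 0 τ := by
  have hc2 := hc₂ hc₁ hlow hhigh
  have hlhs : Integrable (fun r : ℝ =>
      Real.exp (τ * x - V x) * Real.exp (-(c₂/2) * (r - x)^2)) := by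
    exact ((integrable_exp_neg_mul_sq (half_pos hc2)).const_mul (Real.exp (τ * x - V x))).comp_sub_right x
  have h2 : (∫ r : ℝ, Real.exp (τ * x - V x) * Real.exp (-(c₂/2) * (r - x)^2))
      ≤ ∫ r : ℝ, Real.exp (τ * r - V r) := by
    apply integral_mono hlhs (integrable_exp_h hc₁ hV hlow τ)
    intro r
    have h3 := sandwich_lb hV hhigh hx r
    simp only
    rw [← Real.exp_add]
    apply Real.exp_le_exp.mpr; linarith
  have h5 : (∫ r : ℝ, Real.exp (τ * x - V x) * Real.exp (-(c₂/2) * (r - x)^2))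
      = Real.exp (τ * x - V x) * KL c₂ := by
    rw [MeasureTheory.integral_const_mul, KL]
    congr 1
    exact integral_sub_right_eq_self (fun s => Real.exp (-(c₂/2) * s^2)) x
  rw [Ei]
  simp only [pow_zero, one_mul]
  linarith

end Bounds

noncomputable def Ci (V : ℝ → ℝ) (y : ℝ) (k : ℕ) (τ : ℝ) : ℝ :=
  ∫ r : ℝ, (r - y)^k * Real.exp (τ * r - V r)

section CiFacts
variable {V : ℝ → ℝ} {c₁ c₂ : ℝ} (hc₁ : 0 < c₁) (hV : ContDiff ℝ 2 V)
  (hlow : ∀ r : ℝ, c₁ ≤ deriv (deriv V) r)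
include hc₁ hV hlow

lemma Ci_expand1 (y τ : ℝ) : Ci V y 1 τ = Ei V 1 τ - y * Ei V 0 τ := by
  have h0 := integrable_pow_exp hc₁ hV hlow τ 0
  have h1 := integrable_pow_exp hc₁ hV hlow τ 1
  rw [Ci, Ei, Ei]
  have heq : (fun r : ℝ => (r - y)^1 * Real.exp (τ * r - V r))
      = fun r : ℝ => r^1 * Real.exp (τ * r - V r) - y * (r^0 * Real.exp (τ * r - V r)) := by
    funext r; ring
  rw [heq, integral_sub h1 (h0.const_mul y), MeasureTheory.integral_const_mul]

lemma Ci_expand2 (y τ : ℝ) :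
    Ci V y 2 τ = Ei V 2 τ - 2*y*Ei V 1 τ + y^2*Ei V 0 τ := by
  have h0 := integrable_pow_exp hc₁ hV hlow τ 0
  have h1 := integrable_pow_exp hc₁ hV hlow τ 1
  have h2 := integrable_pow_exp hc₁ hV hlow τ 2
  rw [Ci, Ei, Ei, Ei]
  have heq : (fun r : ℝ => (r - y)^2 * Real.exp (τ * r - V r))
      = fun r : ℝ => (r^2 * Real.exp (τ * r - V r) - (2*y) * (r^1 * Real.exp (τ * r - V r)))
        + y^2 * (r^0 * Real.exp (τ * r - V r)) := by
    funext r; ring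
  rw [heq, integral_add
      (show Integrable (fun r : ℝ => r^2 * Real.exp (τ * r - V r) - 2*y*(r^1 * Real.exp (τ * r - V r))) volume from h2.sub (h1.const_mul (2*y)))
      (show Integrable (fun r : ℝ => y^2 * (r^0 * Real.exp (τ * r - V r))) volume from h0.const_mul (y^2)),
    integral_sub h2 (h1.const_mul (2*y)), MeasureTheory.integral_const_mul,
    MeasureTheory.integral_const_mul]

lemma Ci_expand3 (y τ : ℝ) :
    Ci V y 3 τ = Ei V 3 τ - 3*y*Ei V 2 τ + 3*y^2*Ei V 1 τ - y^3*Ei V 0 τ := by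
  have h0 := integrable_pow_exp hc₁ hV hlow τ 0
  have h1 := integrable_pow_exp hc₁ hV hlow τ 1
  have h2 := integrable_pow_exp hc₁ hV hlow τ 2
  have h3 := integrable_pow_exp hc₁ hV hlow τ 3
  rw [Ci, Ei, Ei, Ei, Ei]
  have heq : (fun r : ℝ => (r - y)^3 * Real.exp (τ * r - V r))
      = fun r : ℝ => ((r^3 * Real.exp (τ * r - V r) - (3*y) * (r^2 * Real.exp (τ * r - V r)))
        + (3*y^2) * (r^1 * Real.exp (τ * r - V r))) - y^3 * (r^0 * Real.exp (τ * r - V r)) := by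
    funext r; ring
  rw [heq, integral_sub
      (show Integrable (fun r : ℝ => r^3 * Real.exp (τ * r - V r) - 3*y*(r^2 * Real.exp (τ * r - V r)) + 3*y^2*(r^1 * Real.exp (τ * r - V r))) volume from
        (h3.sub (h2.const_mul (3*y))).add (h1.const_mul (3*y^2)))
      (show Integrable (fun r : ℝ => y^3 * (r^0 * Real.exp (τ * r - V r))) volume from h0.const_mul (y^3)),
    integral_add
      (show Integrable (fun r : ℝ => r^3 * Real.exp (τ * r - V r) - 3*y*(r^2 * Real.exp (τ * r - V r))) volume from h3.sub (h2.const_mul (3*y)))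
      (show Integrable (fun r : ℝ => 3*y^2 * (r^1 * Real.exp (τ * r - V r))) volume from h1.const_mul (3*y^2)),
    integral_sub h3 (h2.const_mul (3*y)),
    MeasureTheory.integral_const_mul, MeasureTheory.integral_const_mul,
    MeasureTheory.integral_const_mul]

lemma Ci_expand4 (y τ : ℝ) :
    Ci V y 4 τ = Ei V 4 τ - 4*y*Ei V 3 τ + 6*y^2*Ei V 2 τ - 4*y^3*Ei V 1 τ + y^4*Ei V 0 τ := by
  have h0 := integrable_pow_exp hc₁ hV hlow τ 0
  have h1 := integrable_pow_exp hc₁ hV hlow τ 1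
  have h2 := integrable_pow_exp hc₁ hV hlow τ 2
  have h3 := integrable_pow_exp hc₁ hV hlow τ 3
  have h4 := integrable_pow_exp hc₁ hV hlow τ 4
  rw [Ci, Ei, Ei, Ei, Ei, Ei]
  have heq : (fun r : ℝ => (r - y)^4 * Real.exp (τ * r - V r))
      = fun r : ℝ => (((r^4 * Real.exp (τ * r - V r) - (4*y) * (r^3 * Real.exp (τ * r - V r)))
        + (6*y^2) * (r^2 * Real.exp (τ * r - V r)))
        - (4*y^3) * (r^1 * Real.exp (τ * r - V r)))
        + y^4 * (r^0 * Real.exp (τ * r - V r)) := by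
    funext r; ring
  rw [heq,
    integral_add
      (show Integrable (fun r : ℝ => r^4 * Real.exp (τ * r - V r) - 4*y*(r^3 * Real.exp (τ * r - V r)) + 6*y^2*(r^2 * Real.exp (τ * r - V r)) - 4*y^3*(r^1 * Real.exp (τ * r - V r))) volume from
        ((h4.sub (h3.const_mul (4*y))).add (h2.const_mul (6*y^2))).sub (h1.const_mul (4*y^3)))
      (show Integrable (fun r : ℝ => y^4 * (r^0 * Real.exp (τ * r - V r))) volume from h0.const_mul (y^4)),
    integral_sub
      (show Integrable (fun r : ℝ => r^4 * Real.exp (τ * r - V r) - 4*y*(r^3 * Real.exp (τ * r - V r)) + 6*y^2*(r^2 * Real.exp (τ * r - V r))) volume from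
        (h4.sub (h3.const_mul (4*y))).add (h2.const_mul (6*y^2)))
      (show Integrable (fun r : ℝ => 4*y^3 * (r^1 * Real.exp (τ * r - V r))) volume from h1.const_mul (4*y^3)),
    integral_add
      (show Integrable (fun r : ℝ => r^4 * Real.exp (τ * r - V r) - 4*y*(r^3 * Real.exp (τ * r - V r))) volume from h4.sub (h3.const_mul (4*y)))
      (show Integrable (fun r : ℝ => 6*y^2 * (r^2 * Real.exp (τ * r - V r))) volume from h2.const_mul (6*y^2)),
    integral_sub h4 (h3.const_mul (4*y)),
    MeasureTheory.integral_const_mul, MeasureTheory.integral_const_mul,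
    MeasureTheory.integral_const_mul, MeasureTheory.integral_const_mul]

lemma abs_Ci_le (y τ : ℝ) (k : ℕ) :
    |Ci V y k τ| ≤ ∫ r : ℝ, |r - y|^k * Real.exp (τ * r - V r) := by
  rw [Ci]
  have h := MeasureTheory.norm_integral_le_integral_norm
    (f := fun r : ℝ => (r - y)^k * Real.exp (τ * r - V r)) (μ := volume)
  rw [Real.norm_eq_abs] at h
  refine h.trans (le_of_eq ?_)
  congr 1; funext r
  rw [Real.norm_eq_abs, abs_mul, abs_pow, abs_of_nonneg (Real.exp_pos _).le]

end CiFacts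

lemma div_le_div_of_bounds {A Z Mv K L : ℝ} (hM : 0 < Mv) (hL : 0 < L) (hZ : 0 < Z)
    (hA0 : 0 ≤ A) (hA : A ≤ Mv*K) (hZl : Mv*L ≤ Z) : A/Z ≤ K/L := by
  have hK : 0 ≤ K := by nlinarith
  rw [div_le_div_iff₀ hZ hL]
  calc A*L ≤ (Mv*K)*L := by nlinarith
    _ ≤ K*Z := by nlinarith

lemma le_div_of_bounds {A Z Mv K L : ℝ} (hM : 0 < Mv) (hL : 0 < L) (hZ : 0 < Z)
    (hK : 0 ≤ K) (hA : Mv*K ≤ A) (hZu : Z ≤ Mv*L) : K/L ≤ A/Z := by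
  rw [div_le_div_iff₀ hL hZ]
  calc K*Z ≤ K*(Mv*L) := by nlinarith
    _ ≤ A*L := by nlinarith

section CumBounds
variable {V : ℝ → ℝ} {c₁ c₂ : ℝ} (hc₁ : 0 < c₁) (hV : ContDiff ℝ 2 V)
  (hlow : ∀ r : ℝ, c₁ ≤ deriv (deriv V) r) (hhigh : ∀ r : ℝ, deriv (deriv V) r ≤ c₂)
include hc₁ hV hlow hhigh

lemma gm_dist {τ x : ℝ} (hx : deriv V x = τ) : |gm V τ - x| ≤ Kn c₁ 1 / KL c₂ := by
  have hc2 := hc₂ hc₁ hlow hhigh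
  have hZ := Ei0_pos hc₁ hV hlow τ
  have hMpos : 0 < Real.exp (τ * x - V x) := Real.exp_pos _
  have heq : gm V τ - x = Ci V x 1 τ / Ei V 0 τ := by
    rw [Ci_expand1 hc₁ hV hlow, gm]; field_simp
  rw [heq, abs_div, abs_of_pos hZ]
  have hA0 : (0:ℝ) ≤ ∫ r : ℝ, |r - x|^1 * Real.exp (τ * r - V r) :=
    integral_nonneg (fun r => by positivity)
  have habs := abs_Ci_le hc₁ hV hlow x τ 1
  have h1 : |Ci V x 1 τ| / Ei V 0 τ
      ≤ (∫ r : ℝ, |r - x|^1 * Real.exp (τ * r - V r)) / Ei V 0 τ :=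
    (div_le_div_iff_of_pos_right hZ).mpr habs
  refine h1.trans ?_
  exact div_le_div_of_bounds hMpos (KL_pos hc2) hZ hA0
    (moment_bound hc₁ hV hlow hx 1) (Z_lower hc₁ hV hlow hhigh hx)

lemma gv_le (τ : ℝ) : gv V τ ≤ Kn c₁ 2 / KL c₂ := by
  obtain ⟨x, hx⟩ := derivV_surj hV hc₁ hlow τ
  have hc2 := hc₂ hc₁ hlow hhigh
  have hZ := Ei0_pos hc₁ hV hlow τ
  have hMpos : 0 < Real.exp (τ * x - V x) := Real.exp_pos _
  have heq : gv V τ = Ci V x 2 τ / Ei V 0 τ - (gm V τ - x)^2 := by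
    rw [Ci_expand2 hc₁ hV hlow, gv, gm]; field_simp; ring
  have h1 : gv V τ ≤ Ci V x 2 τ / Ei V 0 τ := by
    rw [heq]; nlinarith [sq_nonneg (gm V τ - x)]
  refine h1.trans ?_
  have hCieq : Ci V x 2 τ = ∫ r : ℝ, |r - x|^2 * Real.exp (τ * r - V r) := by
    rw [Ci]; congr 1; funext r; rw [sq_abs]
  rw [hCieq]
  exact div_le_div_of_bounds hMpos (KL_pos hc2) hZ
    (integral_nonneg (fun r => by positivity))
    (moment_bound hc₁ hV hlow hx 2) (Z_lower hc₁ hV hlow hhigh hx)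

lemma gv_ge (τ : ℝ) : (2/3) * Real.exp (-(c₂/2)) / KL c₁ ≤ gv V τ := by
  obtain ⟨x, hx⟩ := derivV_surj hV hc₁ hlow τ
  have hc2 := hc₂ hc₁ hlow hhigh
  have hZ := Ei0_pos hc₁ hV hlow τ
  have hMpos : 0 < Real.exp (τ * x - V x) := Real.exp_pos _
  set m := gm V τ with hm
  have heq : gv V τ = Ci V m 2 τ / Ei V 0 τ := by
    rw [Ci_expand2 hc₁ hV hlow, gv, hm, gm]; field_simp; ring
  -- lower bound the centered second moment by a set integral
  have hintm := integrable_cpow hc₁ hV hlow τ m 2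
  have hset1 : (∫ r in Set.Icc (x-1) (x+1), (r - m)^2 * Real.exp (τ * r - V r))
      ≤ Ci V m 2 τ := by
    rw [Ci]
    exact setIntegral_le_integral hintm (Filter.Eventually.of_forall (fun r => by positivity))
  have hset2 : Real.exp ((τ * x - V x) - c₂/2) * ∫ r in Set.Icc (x-1) (x+1), (r - m)^2
      ≤ ∫ r in Set.Icc (x-1) (x+1), (r - m)^2 * Real.exp (τ * r - V r) := by
    rw [← MeasureTheory.integral_const_mul]
    apply setIntegral_mono_on
    · exact ((continuous_const.mul (by fun_prop : Continuous (fun r : ℝ => (r - m)^2))).integrableOn_Icc)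
    · exact hintm.integrableOn
    · exact measurableSet_Icc
    · intro r hr
      obtain ⟨hr1, hr2⟩ := hr
      have hsq : (r - x)^2 ≤ 1 := by nlinarith
      have hle : (τ * x - V x) - c₂/2 ≤ τ * r - V r := by
        have := sandwich_lb hV hhigh hx r
        nlinarith
      have := Real.exp_le_exp.mpr hle
      nlinarith [sq_nonneg (r - m), Real.exp_pos ((τ * x - V x) - c₂/2)]
  have hval : (2:ℝ)/3 ≤ ∫ r in Set.Icc (x-1) (x+1), (r - m)^2 := by
    have h1 : (∫ r in Set.Icc (x-1) (x+1), (r - m)^2)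
        = ∫ r in (x-1)..(x+1), (r - m)^2 := by
      rw [MeasureTheory.integral_Icc_eq_integral_Ioc,
        intervalIntegral.integral_of_le (by linarith)]
    rw [h1, intervalIntegral.integral_comp_sub_right (fun u => u^2) m, integral_pow]
    have ht : ((x+1-m)^3 - (x-1-m)^3) = 6*(x-m)^2 + 2 := by ring
    nlinarith [sq_nonneg (x - m)]
  have hA : Real.exp (τ * x - V x) * (Real.exp (-(c₂/2)) * (2/3)) ≤ Ci V m 2 τ := by
    have h3 : Real.exp ((τ * x - V x) - c₂/2)
        = Real.exp (τ * x - V x) * Real.exp (-(c₂/2)) := by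
      rw [← Real.exp_add]; congr 1
    have h4 := hset2.trans hset1
    rw [h3] at h4
    have h5 : Real.exp (τ * x - V x) * Real.exp (-(c₂/2)) * (2/3)
        ≤ Real.exp (τ * x - V x) * Real.exp (-(c₂/2))
          * ∫ r in Set.Icc (x-1) (x+1), (r - m)^2 := by
      have hpos : (0:ℝ) < Real.exp (τ * x - V x) * Real.exp (-(c₂/2)) := by positivity
      nlinarith
    calc Real.exp (τ * x - V x) * (Real.exp (-(c₂/2)) * (2/3))
        = Real.exp (τ * x - V x) * Real.exp (-(c₂/2)) * (2/3) := by ring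
      _ ≤ _ := h5.trans h4
  rw [heq]
  have hfin := le_div_of_bounds (A := Ci V m 2 τ) (Z := Ei V 0 τ)
    (Mv := Real.exp (τ * x - V x)) (K := Real.exp (-(c₂/2)) * (2/3)) (L := KL c₁)
    hMpos (KL_pos hc₁) hZ (by positivity) hA (Z_upper hc₁ hV hlow hx)
  calc (2/3) * Real.exp (-(c₂/2)) / KL c₁
      = (Real.exp (-(c₂/2)) * (2/3)) / KL c₁ := by ring_nf
    _ ≤ Ci V m 2 τ / Ei V 0 τ := hfin

lemma cmoment_bd (k : ℕ) (τ : ℝ) :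
    (∫ r : ℝ, |r - gm V τ|^k * Real.exp (τ * r - V r)) / Ei V 0 τ
      ≤ 2^k * (Kn c₁ k / KL c₂ + (Kn c₁ 1 / KL c₂)^k) := by
  obtain ⟨x, hx⟩ := derivV_surj hV hc₁ hlow τ
  have hc2 := hc₂ hc₁ hlow hhigh
  have hZ := Ei0_pos hc₁ hV hlow τ
  have hMpos : 0 < Real.exp (τ * x - V x) := Real.exp_pos _
  set m := gm V τ with hm
  set B1 : ℝ := Kn c₁ 1 / KL c₂ with hB1
  have hB1nn : 0 ≤ B1 := div_nonneg (Kn_nonneg c₁ 1) (KL_pos hc2).le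
  have hdist : |m - x| ≤ B1 := gm_dist hc₁ hV hlow hhigh hx
  have hpw : ∀ r : ℝ, |r - m|^k * Real.exp (τ * r - V r)
      ≤ 2^k * (|r - x|^k * Real.exp (τ * r - V r)) + (2^k * B1^k) * Real.exp (τ * r - V r) := by
    intro r
    have h1 : |r - m| = |(r - x) + (x - m)| := by congr 1; ring
    have h2 : |r - m|^k ≤ 2^k * (|r - x|^k + |x - m|^k) := by
      rw [h1]; exact abs_add_pow_le (r - x) (x - m) k
    have h3 : |x - m|^k ≤ B1^k := by
      apply pow_le_pow_left₀ (abs_nonneg _)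
      rw [abs_sub_comm]; exact hdist
    have hexp := Real.exp_pos (τ * r - V r)
    have h4 : |r - m|^k ≤ 2^k * |r - x|^k + 2^k * B1^k := by nlinarith [pow_pos (show (0:ℝ) < 2 by norm_num) k]
    nlinarith [pow_nonneg (abs_nonneg (r - m)) k]
  have hint1 := integrable_weight hc₁ hV hlow τ m k
  have hint2 : Integrable (fun r : ℝ => 2^k * (|r - x|^k * Real.exp (τ * r - V r))
      + (2^k * B1^k) * Real.exp (τ * r - V r)) :=
    ((integrable_weight hc₁ hV hlow τ x k).const_mul _).add
      ((integrable_exp_h hc₁ hV hlow τ).const_mul _)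
  have hmono := integral_mono hint1 hint2 hpw
  rw [integral_add ((integrable_weight hc₁ hV hlow τ x k).const_mul _)
      ((integrable_exp_h hc₁ hV hlow τ).const_mul _),
    MeasureTheory.integral_const_mul, MeasureTheory.integral_const_mul] at hmono
  have hZeq : (∫ r : ℝ, Real.exp (τ * r - V r)) = Ei V 0 τ := by
    rw [Ei]; congr 1; funext r; rw [pow_zero, one_mul]
  rw [hZeq] at hmono
  have hA : (∫ r : ℝ, |r - x|^k * Real.exp (τ * r - V r)) / Ei V 0 τ ≤ Kn c₁ k / KL c₂ :=
    div_le_div_of_bounds hMpos (KL_pos hc2) hZ (integral_nonneg (fun r => by positivity))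
      (moment_bound hc₁ hV hlow hx k) (Z_lower hc₁ hV hlow hhigh hx)
  have h5 : (∫ r : ℝ, |r - m|^k * Real.exp (τ * r - V r)) / Ei V 0 τ
      ≤ (2^k * (∫ r : ℝ, |r - x|^k * Real.exp (τ * r - V r)) + 2^k * B1^k * Ei V 0 τ) / Ei V 0 τ :=
    (div_le_div_iff_of_pos_right hZ).mpr hmono
  refine h5.trans ?_
  rw [add_div, mul_div_assoc, mul_div_assoc, div_self hZ.ne', mul_one]
  have h2k : (0:ℝ) ≤ 2^k := by positivity
  have := mul_le_mul_of_nonneg_left hA h2k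
  nlinarith [this]

lemma gc3_bd (τ : ℝ) :
    |gc3 V τ| ≤ 2^3 * (Kn c₁ 3 / KL c₂ + (Kn c₁ 1 / KL c₂)^3) := by
  have hZ := Ei0_pos hc₁ hV hlow τ
  set m := gm V τ with hm
  have heq : gc3 V τ = Ci V m 3 τ / Ei V 0 τ := by
    rw [Ci_expand3 hc₁ hV hlow, gc3, hm, gm]; field_simp; ring
  rw [heq, abs_div, abs_of_pos hZ]
  refine le_trans ((div_le_div_iff_of_pos_right hZ).mpr (abs_Ci_le hc₁ hV hlow m τ 3)) ?_
  exact cmoment_bd hc₁ hV hlow hhigh 3 τ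

lemma gc4_bd (τ : ℝ) :
    |gc4 V τ| ≤ 2^4 * (Kn c₁ 4 / KL c₂ + (Kn c₁ 1 / KL c₂)^4) + 3 * (Kn c₁ 2 / KL c₂)^2 := by
  have hc2 := hc₂ hc₁ hlow hhigh
  have hZ := Ei0_pos hc₁ hV hlow τ
  set m := gm V τ with hm
  have heq : gc4 V τ = Ci V m 4 τ / Ei V 0 τ - 3 * (gv V τ)^2 := by
    rw [Ci_expand4 hc₁ hV hlow, gc4, gv, hm, gm]; field_simp; ring
  have hCieq : Ci V m 4 τ = ∫ r : ℝ, |r - m|^4 * Real.exp (τ * r - V r) := by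
    rw [Ci]; congr 1; funext r
    rw [show |r - m|^4 = ((r - m)^2)^2 by rw [← abs_pow]; rw [← pow_mul]; rw [abs_of_nonneg (by positivity)]]
    ring_nf
  have h1 : Ci V m 4 τ / Ei V 0 τ ≤ 2^4 * (Kn c₁ 4 / KL c₂ + (Kn c₁ 1 / KL c₂)^4) := by
    rw [hCieq]; exact cmoment_bd hc₁ hV hlow hhigh 4 τ
  have h2 : 0 ≤ Ci V m 4 τ := by
    rw [hCieq]; exact integral_nonneg (fun r => by positivity)
  have hgv1 : gv V τ ≤ Kn c₁ 2 / KL c₂ := gv_le hc₁ hV hlow hhigh τ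
  have hgv0 : 0 ≤ gv V τ := by
    have := gv_ge hc₁ hV hlow hhigh τ
    have hpos : 0 < (2/3) * Real.exp (-(c₂/2)) / KL c₁ := by
      have := KL_pos hc₁; positivity
    linarith
  have h3 : (gv V τ)^2 ≤ (Kn c₁ 2 / KL c₂)^2 := by nlinarith
  rw [heq, abs_sub_comm]
  have h4 : |3 * (gv V τ)^2 - Ci V m 4 τ / Ei V 0 τ|
      ≤ max (3 * (gv V τ)^2) (Ci V m 4 τ / Ei V 0 τ) := by
    rw [abs_sub_le_iff]
    constructor
    · have : 0 ≤ Ci V m 4 τ / Ei V 0 τ := div_nonneg h2 hZ.le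
      have h5 : 3 * (gv V τ)^2 - Ci V m 4 τ / Ei V 0 τ ≤ 3 * (gv V τ)^2 := by linarith
      exact h5.trans (le_max_left _ _)
    · have : 0 ≤ 3 * (gv V τ)^2 := by positivity
      have h5 : Ci V m 4 τ / Ei V 0 τ - 3 * (gv V τ)^2 ≤ Ci V m 4 τ / Ei V 0 τ := by linarith
      exact h5.trans (le_max_right _ _)
  refine h4.trans ?_
  apply max_le
  · have h6 : (0:ℝ) ≤ 2^4 * (Kn c₁ 4 / KL c₂ + (Kn c₁ 1 / KL c₂)^4) := by
      have := div_nonneg (Kn_nonneg c₁ 4) (KL_pos hc2).le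
      have := div_nonneg (Kn_nonneg c₁ 1) (KL_pos hc2).le
      positivity
    linarith
  · have h7 : (0:ℝ) ≤ 3 * (Kn c₁ 2 / KL c₂)^2 := by positivity
    linarith

end CumBounds

section TensionFacts
variable {V : ℝ → ℝ} {c₁ c₂ : ℝ} (hc₁ : 0 < c₁) (hV : ContDiff ℝ 2 V)
  (hlow : ∀ r : ℝ, c₁ ≤ deriv (deriv V) r) (hhigh : ∀ r : ℝ, deriv (deriv V) r ≤ c₂)
include hc₁ hV hlow hhigh

lemma eps_pos' : 0 < (2/3) * Real.exp (-(c₂/2)) / KL c₁ := by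
  have := KL_pos hc₁; positivity

lemma gm_mono : StrictMono (gm V) := by
  apply strictMono_of_deriv_pos
  intro τ
  rw [(hasDerivAt_gm hc₁ hV hlow τ).deriv]
  exact lt_of_lt_of_le (eps_pos' hc₁ hV hlow hhigh) (gv_ge hc₁ hV hlow hhigh τ)

lemma gm_surj : Function.Surjective (gm V) := by
  intro ρ
  set eps := (2/3) * Real.exp (-(c₂/2)) / KL c₁ with heps
  have hepsp : 0 < eps := eps_pos' hc₁ hV hlow hhigh
  have hD : ∀ τ : ℝ, HasDerivAt (fun t => gm V t - eps * t) (gv V τ - eps) τ := by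
    intro τ
    have h1 : HasDerivAt (fun t : ℝ => eps * t) eps τ := by
      simpa using (hasDerivAt_id τ).const_mul eps
    exact (hasDerivAt_gm hc₁ hV hlow τ).sub h1
  have hmono : Monotone (fun τ => gm V τ - eps * τ) := by
    apply monotone_of_deriv_nonneg (fun τ => (hD τ).differentiableAt)
    intro τ
    rw [(hD τ).deriv]
    have := gv_ge hc₁ hV hlow hhigh τ
    linarith
  set b : ℝ := max 0 ((ρ - gm V 0)/eps + 1) with hb
  set a : ℝ := min 0 ((ρ - gm V 0)/eps - 1) with ha
  have hab : a ≤ b := le_trans (min_le_left _ _) (le_max_left _ _)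
  have hfb : ρ ≤ gm V b := by
    have h1 := hmono (le_max_left 0 ((ρ - gm V 0)/eps + 1))
    simp only [mul_zero, sub_zero] at h1
    have h2 : (ρ - gm V 0)/eps + 1 ≤ b := le_max_right _ _
    have h3 : eps * ((ρ - gm V 0)/eps + 1) ≤ eps * b := by nlinarith
    have h4 : eps * ((ρ - gm V 0)/eps + 1) = ρ - gm V 0 + eps := by field_simp
    linarith
  have hfa : gm V a ≤ ρ := by
    have h1 := hmono (min_le_left 0 ((ρ - gm V 0)/eps - 1))
    simp only [mul_zero, sub_zero] at h1
    have h2 : a ≤ (ρ - gm V 0)/eps - 1 := min_le_right _ _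
    have h3 : eps * a ≤ eps * ((ρ - gm V 0)/eps - 1) := by nlinarith
    have h4 : eps * ((ρ - gm V 0)/eps - 1) = ρ - gm V 0 - eps := by field_simp
    linarith
  have hcont : ContinuousOn (gm V) (Set.Icc a b) :=
    (fun τ _ => ((hasDerivAt_gm hc₁ hV hlow τ).differentiableAt.continuousAt.continuousWithinAt))
  obtain ⟨x, _, hx⟩ := intermediate_value_Icc hab hcont ⟨hfa, hfb⟩
  exact ⟨x, hx⟩

/-- The master structural lemma: `tension V` is the inverse of `gm V`. -/
lemma tension_key :
    (∀ ρ, gm V (tension V ρ) = ρ) ∧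
    (∀ ρ, HasDerivAt (tension V) ((gv V (tension V ρ))⁻¹) ρ) := by
  set iso := StrictMono.orderIsoOfSurjective (gm V) (gm_mono hc₁ hV hlow hhigh)
    (gm_surj hc₁ hV hlow hhigh) with hiso
  set T : ℝ → ℝ := fun ρ => iso.symm ρ with hT
  have hfix : ∀ ρ, gm V (T ρ) = ρ := by
    intro ρ
    have := iso.apply_symm_apply ρ
    rwa [hiso] at this
  have hTc : Continuous T := by
    have := iso.symm.toHomeomorph.continuous
    exact this
  have hgvpos : ∀ τ, 0 < gv V τ :=
    fun τ => lt_of_lt_of_le (eps_pos' hc₁ hV hlow hhigh) (gv_ge hc₁ hV hlow hhigh τ)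
  have hT' : ∀ ρ, HasDerivAt T ((gv V (T ρ))⁻¹) ρ := by
    intro ρ
    exact HasDerivAt.of_local_left_inverse (hTc.continuousAt)
      (hasDerivAt_gm hc₁ hV hlow (T ρ))
      (hgvpos (T ρ)).ne'
      (Filter.Eventually.of_forall hfix)
  -- the supremum is attained at T ρ
  have hmax : ∀ ρ τ, τ * ρ - gibbsG V τ ≤ T ρ * ρ - gibbsG V (T ρ) := by
    intro ρ τ
    set φ : ℝ → ℝ := fun t => gibbsG V t - ρ * t with hφ
    have hφd : Differentiable ℝ φ := by
      intro t
      have h1 : HasDerivAt (fun u : ℝ => ρ * u) ρ t := by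
        simpa using (hasDerivAt_id t).const_mul ρ
      exact ((hasDerivAt_gibbsG hc₁ hV hlow t).sub h1).differentiableAt
    have hφD : ∀ t : ℝ, HasDerivAt φ (gm V t - ρ) t := by
      intro t
      have h1 : HasDerivAt (fun u : ℝ => ρ * u) ρ t := by
        simpa using (hasDerivAt_id t).const_mul ρ
      exact (hasDerivAt_gibbsG hc₁ hV hlow t).sub h1
    have hφderiv : ∀ t, deriv φ t = gm V t - ρ := fun t => (hφD t).deriv
    have hkey : φ (T ρ) ≤ φ τ := by
      rcases le_total (T ρ) τ with h | h
      · have hm : MonotoneOn φ (Set.Ici (T ρ)) := by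
          apply monotoneOn_of_deriv_nonneg (convex_Ici _) hφd.continuous.continuousOn
            hφd.differentiableOn
          intro u hu
          rw [interior_Ici] at hu
          rw [hφderiv u]
          have := (gm_mono hc₁ hV hlow hhigh).monotone (le_of_lt hu)
          rw [hfix ρ] at this
          linarith
        exact hm Set.self_mem_Ici (Set.mem_Ici.mpr h) h
      · have hm : AntitoneOn φ (Set.Iic (T ρ)) := by
          apply antitoneOn_of_deriv_nonpos (convex_Iic _) hφd.continuous.continuousOn
            hφd.differentiableOn
          intro u hu
          rw [interior_Iic] at hu
          rw [hφderiv u]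
          have := (gm_mono hc₁ hV hlow hhigh).monotone (le_of_lt hu)
          rw [hfix ρ] at this
          linarith
        exact hm (Set.mem_Iic.mpr h) Set.self_mem_Iic h
    simp only [hφ] at hkey
    nlinarith [hkey]
  have hF : ∀ ρ, freeF V ρ = T ρ * ρ - gibbsG V (T ρ) := by
    intro ρ
    rw [freeF]
    apply le_antisymm
    · exact ciSup_le (hmax ρ)
    · exact le_ciSup ⟨T ρ * ρ - gibbsG V (T ρ), by rintro _ ⟨τ, rfl⟩; exact hmax ρ τ⟩ (T ρ)
  have hFd : ∀ ρ, HasDerivAt (freeF V) (T ρ) ρ := by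
    intro ρ
    have hfun : freeF V = fun ρ => T ρ * ρ - gibbsG V (T ρ) := funext hF
    rw [hfun]
    have h1 : HasDerivAt (fun ρ => gibbsG V (T ρ)) (gm V (T ρ) * (gv V (T ρ))⁻¹) ρ :=
      (hasDerivAt_gibbsG hc₁ hV hlow (T ρ)).comp ρ (hT' ρ)
    have h2 : HasDerivAt (fun ρ => T ρ * ρ) ((gv V (T ρ))⁻¹ * ρ + T ρ * 1) ρ :=
      (hT' ρ).mul (hasDerivAt_id ρ)
    have := h2.fun_sub h1
    refine this.congr_deriv (Eq.symm ?_)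
    rw [hfix ρ]
    ring
  have htT : tension V = T := by
    funext ρ
    rw [tension]
    exact (hFd ρ).deriv
  rw [htT]
  exact ⟨hfix, hT'⟩

end TensionFacts

/-- the tension `τ̂` is three times differentiable, with
`τ̂''(ρ) = -G'''(τ̂(ρ)) τ̂'(ρ)³` and
`τ̂'''(ρ) = 3 τ̂''(ρ)²/τ̂'(ρ) - G''''(τ̂(ρ)) τ̂'(ρ)⁴`,
and both `τ̂''` and `τ̂'''` are bounded on `ℝ`. -/
theorem tension_third_deriv_formulas_and_bounded
    (V : ℝ → ℝ) (c₁ c₂ : ℝ) (hc₁ : 0 < c₁)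
    (hV : ContDiff ℝ 2 V)
    (hlow : ∀ r : ℝ, c₁ ≤ deriv (deriv V) r)
    (hhigh : ∀ r : ℝ, deriv (deriv V) r ≤ c₂) :
    ContDiff ℝ 3 (tension V) ∧
    (∀ ρ : ℝ,
      iteratedDeriv 2 (tension V) ρ
        = -(iteratedDeriv 3 (gibbsG V) (tension V ρ)) * (deriv (tension V) ρ) ^ 3 ∧
      iteratedDeriv 3 (tension V) ρ
        = 3 * (iteratedDeriv 2 (tension V) ρ) ^ 2 / deriv (tension V) ρ
          - iteratedDeriv 4 (gibbsG V) (tension V ρ) * (deriv (tension V) ρ) ^ 4) ∧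
    (∃ C : ℝ, ∀ ρ : ℝ,
      |iteratedDeriv 2 (tension V) ρ| ≤ C ∧ |iteratedDeriv 3 (tension V) ρ| ≤ C) := by
  obtain ⟨hfix, hT'⟩ := tension_key hc₁ hV hlow hhigh
  set eps : ℝ := (2/3) * Real.exp (-(c₂/2)) / KL c₁ with heps
  have hepsp : 0 < eps := eps_pos' hc₁ hV hlow hhigh
  have hgvpos : ∀ τ, 0 < gv V τ :=
    fun τ => lt_of_lt_of_le hepsp (gv_ge hc₁ hV hlow hhigh τ)
  have hgveps : ∀ τ, eps ≤ gv V τ := gv_ge hc₁ hV hlow hhigh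
  set T : ℝ → ℝ := tension V with hTdef
  have hderivT : deriv T = fun ρ => (gv V (T ρ))⁻¹ := funext fun ρ => (hT' ρ).deriv
  have hcompgv : ∀ ρ, HasDerivAt (fun ρ => gv V (T ρ)) (gc3 V (T ρ) * (gv V (T ρ))⁻¹) ρ :=
    fun ρ => (hasDerivAt_gv hc₁ hV hlow (T ρ)).comp ρ (hT' ρ)
  have hcompgc3 : ∀ ρ, HasDerivAt (fun ρ => gc3 V (T ρ)) (gc4 V (T ρ) * (gv V (T ρ))⁻¹) ρ :=
    fun ρ => (hasDerivAt_gc3 hc₁ hV hlow (T ρ)).comp ρ (hT' ρ)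
  have hT2 : ∀ ρ, HasDerivAt (deriv T) (-(gc3 V (T ρ)) * ((gv V (T ρ))⁻¹)^3) ρ := by
    intro ρ
    rw [hderivT]
    have h2 := (hcompgv ρ).fun_inv (hgvpos (T ρ)).ne'
    refine h2.congr_deriv (Eq.symm ?_)
    field_simp
  have hderiv2 : deriv (deriv T) = fun ρ => -(gc3 V (T ρ)) * ((gv V (T ρ))⁻¹)^3 :=
    funext fun ρ => (hT2 ρ).deriv
  have hT3 : ∀ ρ, HasDerivAt (deriv (deriv T))
      (3 * (gc3 V (T ρ))^2 * ((gv V (T ρ))⁻¹)^5 - gc4 V (T ρ) * ((gv V (T ρ))⁻¹)^4) ρ := by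
    intro ρ
    rw [hderiv2]
    have hpow : HasDerivAt (fun ρ => ((gv V (T ρ))⁻¹)^3)
        (3 * ((gv V (T ρ))⁻¹)^2 * (-(gc3 V (T ρ) * (gv V (T ρ))⁻¹) / (gv V (T ρ))^2)) ρ := by
      have := ((hcompgv ρ).fun_inv (hgvpos (T ρ)).ne').fun_pow 3
      refine this.congr_deriv (Eq.symm ?_)
      norm_num
    have := ((hcompgc3 ρ).fun_neg).fun_mul hpow
    refine this.congr_deriv (Eq.symm ?_)
    have hne := (hgvpos (T ρ)).ne'
    field_simp
    ring
  -- iterated derivative identities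
  have hi2 : iteratedDeriv 2 T = deriv (deriv T) := by
    rw [iteratedDeriv_succ, iteratedDeriv_one]
  have hi3 : iteratedDeriv 3 T = deriv (deriv (deriv T)) := by
    rw [iteratedDeriv_succ, hi2]
  have hderiv3 : deriv (deriv (deriv T))
      = fun ρ => 3 * (gc3 V (T ρ))^2 * ((gv V (T ρ))⁻¹)^5 - gc4 V (T ρ) * ((gv V (T ρ))⁻¹)^4 :=
    funext fun ρ => (hT3 ρ).deriv
  have hg1 : deriv (gibbsG V) = gm V := funext fun τ => (hasDerivAt_gibbsG hc₁ hV hlow τ).deriv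
  have hg2 : deriv (gm V) = gv V := funext fun τ => (hasDerivAt_gm hc₁ hV hlow τ).deriv
  have hg3 : deriv (gv V) = gc3 V := funext fun τ => (hasDerivAt_gv hc₁ hV hlow τ).deriv
  have hg4 : deriv (gc3 V) = gc4 V := funext fun τ => (hasDerivAt_gc3 hc₁ hV hlow τ).deriv
  have hiG3 : iteratedDeriv 3 (gibbsG V) = gc3 V := by
    rw [show (3:ℕ) = 2 + 1 from rfl, iteratedDeriv_succ,
      show (2:ℕ) = 1 + 1 from rfl, iteratedDeriv_succ, iteratedDeriv_one, hg1, hg2, hg3]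
  have hiG4 : iteratedDeriv 4 (gibbsG V) = gc4 V := by
    rw [show (4:ℕ) = 3 + 1 from rfl, iteratedDeriv_succ, hiG3, hg4]
  -- continuity facts
  have hEid : ∀ n, Differentiable ℝ (Ei V n) :=
    fun n τ => (hasDerivAt_Ei hc₁ hV hlow n τ).differentiableAt
  have hEic : ∀ n, Continuous (Ei V n) := fun n => (hEid n).continuous
  have hne : ∀ τ, Ei V 0 τ ≠ 0 := fun τ => (Ei0_pos hc₁ hV hlow τ).ne'
  have hgmc : Continuous (gm V) := (hEic 1).div (hEic 0) hne
  have hgc4c : Continuous (gc4 V) := by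
    unfold gc4
    have h40 : Continuous (fun τ => Ei V 4 τ / Ei V 0 τ) := (hEic 4).div (hEic 0) hne
    have h30 : Continuous (fun τ => Ei V 3 τ / Ei V 0 τ) := (hEic 3).div (hEic 0) hne
    have h20 : Continuous (fun τ => Ei V 2 τ / Ei V 0 τ) := (hEic 2).div (hEic 0) hne
    fun_prop
  have hTdiff : Differentiable ℝ T := fun ρ => (hT' ρ).differentiableAt
  have hTc : Continuous T := hTdiff.continuous
  have hgvdiff : Differentiable ℝ (gv V) :=
    fun τ => (hasDerivAt_gv hc₁ hV hlow τ).differentiableAt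
  have hgc3diff : Differentiable ℝ (gc3 V) :=
    fun τ => (hasDerivAt_gc3 hc₁ hV hlow τ).differentiableAt
  have hgvc : Continuous (gv V) := hgvdiff.continuous
  have hgc3c : Continuous (gc3 V) := hgc3diff.continuous
  have hgvne : ∀ ρ, gv V (T ρ) ≠ 0 := fun ρ => (hgvpos (T ρ)).ne'
  have hgc31 : ContDiff ℝ 1 (gc3 V) :=
    contDiff_one_iff_deriv.mpr ⟨hgc3diff, by rw [hg4]; exact hgc4c⟩
  have hgv1 : ContDiff ℝ 1 (gv V) :=
    contDiff_one_iff_deriv.mpr ⟨hgvdiff, by rw [hg3]; exact hgc3c⟩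
  have h21 : (2 : WithTop ℕ∞) = 1 + 1 := by norm_num
  have h32 : (3 : WithTop ℕ∞) = 2 + 1 := by norm_num
  have hgv2 : ContDiff ℝ 2 (gv V) := by
    rw [h21]
    refine contDiff_succ_iff_deriv.mpr ⟨hgvdiff, ?_, ?_⟩
    · intro h; exact absurd h (by norm_num)
    · rw [hg3]; exact hgc31
  have hT1 : ContDiff ℝ 1 T :=
    contDiff_one_iff_deriv.mpr ⟨hTdiff, by
      rw [hderivT]
      exact (hgvc.comp hTc).inv₀ hgvne⟩
  have hT2c : ContDiff ℝ 2 T := by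
    rw [h21]
    refine contDiff_succ_iff_deriv.mpr ⟨hTdiff, ?_, ?_⟩
    · intro h; exact absurd h (by norm_num)
    · rw [hderivT]
      exact ContDiff.inv (hgv1.comp hT1) hgvne
  have hT3c : ContDiff ℝ 3 T := by
    rw [h32]
    refine contDiff_succ_iff_deriv.mpr ⟨hTdiff, ?_, ?_⟩
    · intro h; exact absurd h (by norm_num)
    · rw [hderivT]
      exact ContDiff.inv (hgv2.comp hT2c) hgvne
  refine ⟨hT3c, fun ρ => ⟨?_, ?_⟩, ?_⟩
  · rw [hi2, hderiv2, hiG3, hderivT]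
  · rw [hi3, hderiv3, hi2, hderiv2, hiG4, hderivT]
    have hne' := hgvne ρ
    field_simp
  · -- boundedness
    set C3 : ℝ := 2^3 * (Kn c₁ 3 / KL c₂ + (Kn c₁ 1 / KL c₂)^3) with hC3def
    set C4 : ℝ := 2^4 * (Kn c₁ 4 / KL c₂ + (Kn c₁ 1 / KL c₂)^4) + 3 * (Kn c₁ 2 / KL c₂)^2
      with hC4def
    have hC3 : ∀ τ, |gc3 V τ| ≤ C3 := gc3_bd hc₁ hV hlow hhigh
    have hC4 : ∀ τ, |gc4 V τ| ≤ C4 := gc4_bd hc₁ hV hlow hhigh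
    have hC3nn : 0 ≤ C3 := le_trans (abs_nonneg _) (hC3 0)
    have hC4nn : 0 ≤ C4 := le_trans (abs_nonneg _) (hC4 0)
    have hcommon : ∀ ρ, ((gv V (T ρ))⁻¹ ≤ eps⁻¹ ∧ 0 < (gv V (T ρ))⁻¹) := by
      intro ρ
      exact ⟨inv_anti₀ hepsp (hgveps (T ρ)), inv_pos.mpr (hgvpos (T ρ))⟩
    have hepsinv : 0 < eps⁻¹ := inv_pos.mpr hepsp
    refine ⟨C3 * (eps⁻¹)^3 + (3 * C3^2 * (eps⁻¹)^5 + C4 * (eps⁻¹)^4), fun ρ => ⟨?_, ?_⟩⟩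
    · obtain ⟨hinvle, hinvpos⟩ := hcommon ρ
      have hb3 : ((gv V (T ρ))⁻¹)^3 ≤ (eps⁻¹)^3 := pow_le_pow_left₀ hinvpos.le hinvle 3
      have hq3 : (0:ℝ) ≤ ((gv V (T ρ))⁻¹)^3 := by positivity
      have hgc3r := hC3 (T ρ)
      have hB2nn : (0:ℝ) ≤ 3 * C3^2 * (eps⁻¹)^5 + C4 * (eps⁻¹)^4 := by positivity
      rw [hi2, hderiv2]
      have h1 : |(fun ρ => -(gc3 V (T ρ)) * ((gv V (T ρ))⁻¹)^3) ρ|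
          = |gc3 V (T ρ)| * ((gv V (T ρ))⁻¹)^3 := by
        simp only [abs_mul, abs_neg, abs_pow, abs_of_pos hinvpos]
      rw [h1]
      have h2 : |gc3 V (T ρ)| * ((gv V (T ρ))⁻¹)^3 ≤ C3 * (eps⁻¹)^3 :=
        mul_le_mul hgc3r hb3 hq3 hC3nn
      linarith
    · obtain ⟨hinvle, hinvpos⟩ := hcommon ρ
      have hb4 : ((gv V (T ρ))⁻¹)^4 ≤ (eps⁻¹)^4 := pow_le_pow_left₀ hinvpos.le hinvle 4
      have hb5 : ((gv V (T ρ))⁻¹)^5 ≤ (eps⁻¹)^5 := pow_le_pow_left₀ hinvpos.le hinvle 5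
      have hq4 : (0:ℝ) ≤ ((gv V (T ρ))⁻¹)^4 := by positivity
      have hq5 : (0:ℝ) ≤ ((gv V (T ρ))⁻¹)^5 := by positivity
      have hgc3r := hC3 (T ρ)
      have hgc4r := hC4 (T ρ)
      have habs3 := abs_nonneg (gc3 V (T ρ))
      have hB1nn : (0:ℝ) ≤ C3 * (eps⁻¹)^3 := by positivity
      rw [hi3, hderiv3]
      have h1 : |(fun ρ => 3 * (gc3 V (T ρ))^2 * ((gv V (T ρ))⁻¹)^5
            - gc4 V (T ρ) * ((gv V (T ρ))⁻¹)^4) ρ|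
          ≤ 3 * (gc3 V (T ρ))^2 * ((gv V (T ρ))⁻¹)^5
            + |gc4 V (T ρ)| * ((gv V (T ρ))⁻¹)^4 := by
        simp only
        refine (abs_sub _ _).trans ?_
        have e1 : |3 * (gc3 V (T ρ))^2 * ((gv V (T ρ))⁻¹)^5|
            = 3 * (gc3 V (T ρ))^2 * ((gv V (T ρ))⁻¹)^5 := by
          apply abs_of_nonneg; positivity
        have e2 : |gc4 V (T ρ) * ((gv V (T ρ))⁻¹)^4|
            = |gc4 V (T ρ)| * ((gv V (T ρ))⁻¹)^4 := by
          rw [abs_mul, abs_of_nonneg hq4]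
        rw [e1, e2]
      refine h1.trans ?_
      have h2 : (gc3 V (T ρ))^2 ≤ C3^2 := by
        rw [← sq_abs]
        exact pow_le_pow_left₀ habs3 hgc3r 2
      have h3 : 3 * (gc3 V (T ρ))^2 * ((gv V (T ρ))⁻¹)^5 ≤ 3 * C3^2 * (eps⁻¹)^5 := by
        nlinarith
      have h4 : |gc4 V (T ρ)| * ((gv V (T ρ))⁻¹)^4 ≤ C4 * (eps⁻¹)^4 :=
        mul_le_mul hgc4r hb4 hq4 hC4nn
      linarith
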